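/- Carleman identity: Let k ≥ 0, Ω ⊆ ℝ^(1+n) open, ℓ, w ∈ C³(Ω), σ ∈ C¹(Ω). Define v = e^ℓ w, a = σ − Δℓ, q = k² + a + |∇ℓ|², b = −σv − 2⟨∇v, ∇ℓ⟩, c = (|∇v|² − qv²)∇ℓ. Then e^{2ℓ}(Δw + k²w)²/2 = (Δv + qv)²/2 + b²/2 + a|∇v|² + 2D²ℓ(∇v,∇v) + (−a|∇ℓ|² + 2D²ℓ(∇ℓ,∇ℓ))v² − k²av² + div(b∇v + c) + R, where R = ⟨∇σ, ∇v⟩v + (div(a∇ℓ) − aσ)v². -/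

import Mathlib

open scoped RealInnerProductSpace

noncomputable def lap {n : ℕ} (f : EuclideanSpace ℝ (Fin (n+1)) → ℝ) (x : EuclideanSpace ℝ (Fin (n+1))) : ℝ :=
  ∑ i, fderiv ℝ (fun y => fderiv ℝ f y (EuclideanSpace.single i 1)) x (EuclideanSpace.single i 1)

noncomputable def dvg {n : ℕ} (F : EuclideanSpace ℝ (Fin (n+1)) → EuclideanSpace ℝ (Fin (n+1))) (x : EuclideanSpace ℝ (Fin (n+1))) : ℝ :=
  ∑ i, fderiv ℝ (fun y => F y i) x (EuclideanSpace.single i 1)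

noncomputable def hess {n : ℕ} (f : EuclideanSpace ℝ (Fin (n+1)) → ℝ) (x X Y : EuclideanSpace ℝ (Fin (n+1))) : ℝ :=
  fderiv ℝ (fun y => ⟪gradient f y, Y⟫) x X


namespace Carleman
variable {n : ℕ}
local notation "E" => EuclideanSpace ℝ (Fin (n+1))

noncomputable def pd (i : Fin (n+1)) (f : E → ℝ) : E → ℝ :=
  fun y => fderiv ℝ f y (EuclideanSpace.single i 1)

lemma decomp (z : E) : z = ∑ i, z i • EuclideanSpace.single i (1:ℝ) := by
  ext j
  rw [WithLp.ofLp_sum, Finset.sum_apply]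
  simp [EuclideanSpace.single_apply]

lemma clm_expand (L : E →L[ℝ] ℝ) (z : E) :
    L z = ∑ i, z i * L (EuclideanSpace.single i 1) := by
  conv_lhs => rw [decomp z]
  rw [map_sum]
  simp [smul_eq_mul]

lemma fderiv_expand (f : E → ℝ) (x z : E) :
    fderiv ℝ f x z = ∑ i, z i * pd i f x :=
  clm_expand _ z

lemma grad_inner (f : E → ℝ) (x z : E) : ⟪gradient f x, z⟫ = fderiv ℝ f x z :=
  InnerProductSpace.toDual_symm_apply

lemma grad_apply (f : E → ℝ) (x : E) (i : Fin (n+1)) : gradient f x i = pd i f x := by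
  have h : ⟪gradient f x, EuclideanSpace.single i (1:ℝ)⟫ = gradient f x i := by
    rw [EuclideanSpace.inner_single_right]; simp
  rw [← h, grad_inner]; rfl

lemma inner_grad (f g : E → ℝ) (x : E) :
    ⟪gradient f x, gradient g x⟫ = ∑ i, pd i f x * pd i g x := by
  simp only [PiLp.inner_apply, RCLike.inner_apply, conj_trivial, grad_apply]
  exact Finset.sum_congr rfl fun _ _ => mul_comm _ _

lemma norm_grad (f : E → ℝ) (x : E) :
    ‖gradient f x‖^2 = ∑ i, pd i f x * pd i f x := by
  rw [← real_inner_self_eq_norm_sq, inner_grad]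

lemma lap_pd (f : E → ℝ) (x : E) : lap f x = ∑ i, pd i (pd i f) x := rfl

lemma pd_comm {f : E → ℝ} {x : E} (hf : ContDiffAt ℝ 2 f x) (i j : Fin (n+1)) :
    pd i (pd j f) x = pd j (pd i f) x := by
  have hd : DifferentiableAt ℝ (fderiv ℝ f) x :=
    (hf.fderiv_right (m := 1) (by norm_num)).differentiableAt (by norm_num)
  have key : ∀ u v : E, fderiv ℝ (fun y => fderiv ℝ f y u) x v
      = fderiv ℝ (fderiv ℝ f) x v u := by
    intro u v
    rw [fderiv_clm_apply hd (differentiableAt_const u)]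
    simp
  have e1 : pd i (pd j f) x
      = fderiv ℝ (fderiv ℝ f) x (EuclideanSpace.single i 1) (EuclideanSpace.single j 1) := key _ _
  have e2 : pd j (pd i f) x
      = fderiv ℝ (fderiv ℝ f) x (EuclideanSpace.single j 1) (EuclideanSpace.single i 1) := key _ _
  rw [e1, e2]
  exact hf.isSymmSndFDerivAt (by norm_num) _ _

lemma pd_add {f g : E → ℝ} {x : E} {i : Fin (n+1)} (hf : DifferentiableAt ℝ f x) (hg : DifferentiableAt ℝ g x) :
    pd i (fun y => f y + g y) x = pd i f x + pd i g x := by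
  unfold pd; rw [fderiv_fun_add hf hg]; rfl

lemma pd_sub {f g : E → ℝ} {x : E} {i : Fin (n+1)} (hf : DifferentiableAt ℝ f x) (hg : DifferentiableAt ℝ g x) :
    pd i (fun y => f y - g y) x = pd i f x - pd i g x := by
  unfold pd; rw [fderiv_fun_sub hf hg]; rfl

lemma pd_mul {f g : E → ℝ} {x : E} {i : Fin (n+1)} (hf : DifferentiableAt ℝ f x) (hg : DifferentiableAt ℝ g x) :
    pd i (fun y => f y * g y) x = pd i f x * g x + f x * pd i g x := by
  unfold pd; rw [fderiv_fun_mul hf hg]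
  simp [smul_eq_mul]; ring

lemma pd_neg {f : E → ℝ} {x : E} {i : Fin (n+1)} : pd i (fun y => -f y) x = -pd i f x := by
  unfold pd; rw [fderiv_fun_neg]; rfl

lemma pd_const {x : E} {i : Fin (n+1)} (c : ℝ) : pd i (fun _ => c) x = 0 := by
  unfold pd; rw [fderiv_fun_const]; rfl

lemma pd_const_mul {f : E → ℝ} {x : E} {i : Fin (n+1)} (c : ℝ) (hf : DifferentiableAt ℝ f x) :
    pd i (fun y => c * f y) x = c * pd i f x := by
  unfold pd; rw [fderiv_const_mul hf]; rfl

lemma pd_sum {m : Type*} [Fintype m] {F : m → E → ℝ} {x : E} {i : Fin (n+1)}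
    (hF : ∀ j, DifferentiableAt ℝ (F j) x) :
    pd i (fun y => ∑ j, F j y) x = ∑ j, pd i (F j) x := by
  unfold pd; rw [fderiv_fun_sum (fun j _ => hF j)]
  exact ContinuousLinearMap.sum_apply _ _ _

lemma pd_exp {f : E → ℝ} {x : E} {i : Fin (n+1)} (hf : DifferentiableAt ℝ f x) :
    pd i (fun y => Real.exp (f y)) x = Real.exp (f x) * pd i f x := by
  unfold pd; rw [fderiv_exp hf]; rfl

lemma pd_congr_nhds {f g : E → ℝ} {x : E} {i : Fin (n+1)} (h : f =ᶠ[nhds x] g) :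
    pd i f x = pd i g x := by
  unfold pd; rw [h.fderiv_eq]

lemma hess_pd (f : E → ℝ) (x X Y : E) (hdiff : ∀ j, DifferentiableAt ℝ (pd j f) x) :
    hess f x X Y = ∑ i, ∑ j, X i * Y j * pd i (pd j f) x := by
  have h1 : (fun y => ⟪gradient f y, Y⟫) = fun y => ∑ j, Y j * pd j f y := by
    funext y
    rw [grad_inner, fderiv_expand]
  unfold hess
  rw [h1, fderiv_fun_sum (fun j _ => ((hdiff j).const_mul (Y j)))]
  rw [ContinuousLinearMap.sum_apply]
  rw [Finset.sum_comm]
  refine Finset.sum_congr rfl fun j _ => ?_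
  rw [fderiv_const_mul (hdiff j), ContinuousLinearMap.smul_apply, smul_eq_mul,
    fderiv_expand, Finset.mul_sum]
  refine Finset.sum_congr rfl fun i _ => ?_
  show Y j * (X i * pd i (pd j f) x) = X i * Y j * pd i (pd j f) x
  ring

lemma dvg_add (F G : E → E) (x : E)
    (hF : ∀ i, DifferentiableAt ℝ (fun y => F y i) x)
    (hG : ∀ i, DifferentiableAt ℝ (fun y => G y i) x) :
    dvg (fun y => F y + G y) x = dvg F x + dvg G x := by
  unfold dvg
  rw [← Finset.sum_add_distrib]
  refine Finset.sum_congr rfl fun i _ => ?_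
  have h1 : (fun y => (F y + G y) i) = fun y => F y i + G y i := by
    funext y; rfl
  rw [h1, fderiv_fun_add (hF i) (hG i)]; rfl

lemma smul_grad_apply (φ g : E → ℝ) (i : Fin (n+1)) :
    (fun y => (φ y • gradient g y) i) = fun y => φ y * pd i g y := by
  funext y
  rw [PiLp.smul_apply, smul_eq_mul, grad_apply]

lemma dvg_smul_grad (φ g : E → ℝ) (x : E) (hφ : DifferentiableAt ℝ φ x)
    (hg2 : ∀ j, DifferentiableAt ℝ (pd j g) x) :
    dvg (fun y => φ y • gradient g y) x
      = ∑ i, (pd i φ x * pd i g x + φ x * pd i (pd i g) x) := by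
  unfold dvg
  refine Finset.sum_congr rfl fun i _ => ?_
  rw [smul_grad_apply]
  exact pd_mul hφ (hg2 i)

end Carleman

open Carleman

theorem carleman_identity {n : ℕ} {Ω : Set (EuclideanSpace ℝ (Fin (n+1)))}
    (hΩ : IsOpen Ω) (ℓ w σ : EuclideanSpace ℝ (Fin (n+1)) → ℝ)
    (hℓ : ContDiffOn ℝ 3 ℓ Ω) (hw : ContDiffOn ℝ 3 w Ω) (hσ : ContDiffOn ℝ 1 σ Ω)
    (k : ℝ) (hk : 0 ≤ k)
    (v a q : EuclideanSpace ℝ (Fin (n+1)) → ℝ)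
    (b : EuclideanSpace ℝ (Fin (n+1)) → ℝ)
    (c : EuclideanSpace ℝ (Fin (n+1)) → EuclideanSpace ℝ (Fin (n+1)))
    (R : EuclideanSpace ℝ (Fin (n+1)) → ℝ)
    (hv : v = fun x => Real.exp (ℓ x) * w x)
    (ha : a = fun x => σ x - lap ℓ x)
    (hq : q = fun x => k^2 + a x + ‖gradient ℓ x‖^2)
    (hb : b = fun x => -(σ x * v x) - 2 * ⟪gradient v x, gradient ℓ x⟫)
    (hc : c = fun x => (‖gradient v x‖^2 - q x * (v x)^2) • gradient ℓ x)
    (hR : R = fun x => ⟪gradient σ x, gradient v x⟫ * v x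
        + (dvg (fun y => a y • gradient ℓ y) x - a x * σ x) * (v x)^2) :
    ∀ x ∈ Ω,
      Real.exp (2 * ℓ x) * (lap w x + k^2 * w x)^2 / 2
        = (lap v x + q x * v x)^2 / 2 + (b x)^2 / 2
          + a x * ‖gradient v x‖^2 + 2 * hess ℓ x (gradient v x) (gradient v x)
          + (-(a x) * ‖gradient ℓ x‖^2 + 2 * hess ℓ x (gradient ℓ x) (gradient ℓ x)) * (v x)^2
          - k^2 * a x * (v x)^2
          + dvg (fun y => b y • gradient v y + c y) x + R x := by
  intro x hx
  have hmem : Ω ∈ nhds x := hΩ.mem_nhds hx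
  -- ## smoothness package at x
  have hℓx : ContDiffAt ℝ ((2:ℕ)+1) ℓ x := by exact_mod_cast hℓ.contDiffAt hmem
  have hwx : ContDiffAt ℝ ((2:ℕ)+1) w x := by exact_mod_cast hw.contDiffAt hmem
  have hσx : ContDiffAt ℝ (1:ℕ) σ x := by exact_mod_cast hσ.contDiffAt hmem
  have hvx : ContDiffAt ℝ ((2:ℕ)+1) v x := by
    rw [hv]
    exact_mod_cast (hℓ.contDiffAt hmem).exp.mul (hw.contDiffAt hmem)
  have hℓd : DifferentiableAt ℝ ℓ x := hℓx.differentiableAt (by norm_num)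
  have hwd : DifferentiableAt ℝ w x := hwx.differentiableAt (by norm_num)
  have hσd : DifferentiableAt ℝ σ x := hσx.differentiableAt (by norm_num)
  have hvd : DifferentiableAt ℝ v x := hvx.differentiableAt (by norm_num)
  have hv2 : ContDiffAt ℝ 2 v x := hvx.of_le (by norm_num)
  have hpl : ∀ j, ContDiffAt ℝ (2:ℕ) (pd j ℓ) x := fun j =>
    (hℓx.fderiv_right (by norm_cast)).clm_apply contDiffAt_const
  have hpld : ∀ j, DifferentiableAt ℝ (pd j ℓ) x :=
    fun j => (hpl j).differentiableAt (by norm_num)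
  have hppld : ∀ i j, DifferentiableAt ℝ (pd i (pd j ℓ)) x := fun i j =>
    ((((hpl j).fderiv_right (m := 1) (by norm_cast)).clm_apply
      contDiffAt_const)).differentiableAt (by norm_num)
  have hpv : ∀ j, ContDiffAt ℝ (2:ℕ) (pd j v) x := fun j =>
    (hvx.fderiv_right (by norm_cast)).clm_apply contDiffAt_const
  have hpvd : ∀ j, DifferentiableAt ℝ (pd j v) x :=
    fun j => (hpv j).differentiableAt (by norm_num)
  have hpwd : ∀ j, DifferentiableAt ℝ (pd j w) x := fun j =>
    (((hwx.fderiv_right (by norm_cast)).clm_apply contDiffAt_const)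
      : ContDiffAt ℝ (2:ℕ) (pd j w) x).differentiableAt (by norm_num)
  have hlapfun : lap ℓ = fun y => ∑ j, pd j (pd j ℓ) y := rfl
  have hlapld : DifferentiableAt ℝ (lap ℓ) x := by
    rw [hlapfun]
    exact DifferentiableAt.fun_sum (fun j _ => hppld j j)
  have hexpd : DifferentiableAt ℝ (fun y => Real.exp (ℓ y)) x := hℓd.exp
  -- ## Step A: derivatives of v in terms of w, ℓ
  have hpdv : ∀ y ∈ Ω, ∀ i, pd i v y
      = Real.exp (ℓ y) * pd i ℓ y * w y + Real.exp (ℓ y) * pd i w y := by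
    intro y hy i
    have hℓdy : DifferentiableAt ℝ ℓ y :=
      (hℓ.contDiffAt (hΩ.mem_nhds hy)).differentiableAt (by norm_num)
    have hwdy : DifferentiableAt ℝ w y :=
      (hw.contDiffAt (hΩ.mem_nhds hy)).differentiableAt (by norm_num)
    rw [hv]
    rw [pd_mul hℓdy.exp hwdy, pd_exp hℓdy]
  have hVix : ∀ i, pd i v x
      = Real.exp (ℓ x) * pd i ℓ x * w x + Real.exp (ℓ x) * pd i w x :=
    fun i => hpdv x hx i
  have hHvii : ∀ i, pd i (pd i v) x
      = ((Real.exp (ℓ x) * pd i ℓ x * pd i ℓ x + Real.exp (ℓ x) * pd i (pd i ℓ) x) * w x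
          + Real.exp (ℓ x) * pd i ℓ x * pd i w x)
        + (Real.exp (ℓ x) * pd i ℓ x * pd i w x + Real.exp (ℓ x) * pd i (pd i w) x) := by
    intro i
    have heq : pd i v =ᶠ[nhds x]
        (fun y => Real.exp (ℓ y) * pd i ℓ y * w y + Real.exp (ℓ y) * pd i w y) :=
      Filter.eventuallyEq_of_mem hmem (fun y hy => hpdv y hy i)
    rw [pd_congr_nhds heq]
    rw [pd_add ((hexpd.fun_mul (hpld i)).fun_mul hwd) (hexpd.fun_mul (hpwd i))]
    rw [pd_mul (hexpd.fun_mul (hpld i)) hwd, pd_mul hexpd (hpld i), pd_exp hℓd]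
    rw [pd_mul hexpd (hpwd i), pd_exp hℓd]
  have hlapv : lap v x
      = (Real.exp (ℓ x) * w x) * (∑ i, pd i ℓ x * pd i ℓ x)
        + (Real.exp (ℓ x) * w x) * (∑ i, pd i (pd i ℓ) x)
        + (2 * Real.exp (ℓ x)) * (∑ i, pd i w x * pd i ℓ x)
        + Real.exp (ℓ x) * (∑ i, pd i (pd i w) x) := by
    rw [lap_pd]
    rw [Finset.sum_congr rfl (fun i _ => hHvii i)]
    have e : ∀ i : Fin (n+1),
        ((Real.exp (ℓ x) * pd i ℓ x * pd i ℓ x + Real.exp (ℓ x) * pd i (pd i ℓ) x) * w x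
          + Real.exp (ℓ x) * pd i ℓ x * pd i w x)
        + (Real.exp (ℓ x) * pd i ℓ x * pd i w x + Real.exp (ℓ x) * pd i (pd i w) x)
        = (Real.exp (ℓ x) * w x) * (pd i ℓ x * pd i ℓ x)
          + (Real.exp (ℓ x) * w x) * (pd i (pd i ℓ) x)
          + (2 * Real.exp (ℓ x)) * (pd i w x * pd i ℓ x)
          + Real.exp (ℓ x) * (pd i (pd i w) x) := fun i => by ring
    rw [Finset.sum_congr rfl (fun i _ => e i)]
    simp only [Finset.sum_add_distrib, ← Finset.mul_sum]
  have hS2 : (∑ i, pd i v x * pd i ℓ x)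
      = (Real.exp (ℓ x) * w x) * (∑ i, pd i ℓ x * pd i ℓ x)
        + Real.exp (ℓ x) * (∑ i, pd i w x * pd i ℓ x) := by
    have e : ∀ i, pd i v x * pd i ℓ x
        = (Real.exp (ℓ x) * w x) * (pd i ℓ x * pd i ℓ x)
          + Real.exp (ℓ x) * (pd i w x * pd i ℓ x) := fun i => by rw [hVix i]; ring
    rw [Finset.sum_congr rfl (fun i _ => e i)]
    simp only [Finset.sum_add_distrib, ← Finset.mul_sum]
  have hbx : b x = -(σ x * v x) - 2 * ∑ i, pd i v x * pd i ℓ x := by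
    simp only [hb]; rw [inner_grad]
  have hqx : q x = k^2 + (σ x - ∑ i, pd i (pd i ℓ) x) + ∑ i, pd i ℓ x * pd i ℓ x := by
    simp only [hq, ha]; rw [norm_grad, lap_pd]
  have hvxval : v x = Real.exp (ℓ x) * w x := by rw [hv]
  have haux : Real.exp (ℓ x) * (lap w x + k^2 * w x) = lap v x + q x * v x + b x := by
    rw [hlapv, hqx, hbx, hvxval, hS2, lap_pd w x]
    ring
  have hexp2 : Real.exp (2 * ℓ x) = Real.exp (ℓ x) * Real.exp (ℓ x) := by
    rw [two_mul, Real.exp_add]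
  have hLHS : Real.exp (2 * ℓ x) * (lap w x + k^2 * w x)^2 / 2
      = (lap v x + q x * v x + b x)^2 / 2 := by
    rw [← haux, hexp2]; ring
  -- ## function-level rewrites
  have hbfun : b = fun y => -(σ y * v y) - 2 * ∑ j, pd j v y * pd j ℓ y := by
    rw [hb]; funext y; rw [inner_grad]
  have hcfun : c = fun y =>
      ((∑ j, pd j v y * pd j v y)
        - (k^2 + (σ y - lap ℓ y) + ∑ j, pd j ℓ y * pd j ℓ y) * (v y * v y))
        • gradient ℓ y := by
    rw [hc]; funext y
    congr 1
    simp only [hq, ha]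
    rw [norm_grad v y, norm_grad ℓ y]
    ring
  -- ## differentiability of compound scalars
  have hSvl_d : DifferentiableAt ℝ (fun y => ∑ j, pd j v y * pd j ℓ y) x :=
    DifferentiableAt.fun_sum (fun j _ => (hpvd j).mul (hpld j))
  have hSvv_d : DifferentiableAt ℝ (fun y => ∑ j, pd j v y * pd j v y) x :=
    DifferentiableAt.fun_sum (fun j _ => (hpvd j).mul (hpvd j))
  have hSll_d : DifferentiableAt ℝ (fun y => ∑ j, pd j ℓ y * pd j ℓ y) x :=
    DifferentiableAt.fun_sum (fun j _ => (hpld j).mul (hpld j))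
  have hQ_d : DifferentiableAt ℝ
      (fun y => k^2 + (σ y - lap ℓ y) + ∑ j, pd j ℓ y * pd j ℓ y) x :=
    ((differentiableAt_const _).add (hσd.sub hlapld)).add hSll_d
  have hbd : DifferentiableAt ℝ b x := by
    rw [hbfun]
    exact ((hσd.mul hvd).neg).sub (hSvl_d.const_mul 2)
  have had : DifferentiableAt ℝ a x := by rw [ha]; exact hσd.sub hlapld
  -- ## goal-side setup
  rw [hLHS]
  simp only [hR, hcfun]
  set φ : EuclideanSpace ℝ (Fin (n+1)) → ℝ := fun y =>
      (∑ j, pd j v y * pd j v y)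
        - (k^2 + (σ y - lap ℓ y) + ∑ j, pd j ℓ y * pd j ℓ y) * (v y * v y) with hφ
  have hφd : DifferentiableAt ℝ φ x := by
    rw [hφ]
    exact hSvv_d.sub (hQ_d.mul (hvd.mul hvd))
  -- ## first derivatives of b, φ, a at x
  have hpb : ∀ i, pd i b x
      = -(pd i σ x * v x + σ x * pd i v x)
        - 2 * ∑ j, (pd i (pd j v) x * pd j ℓ x + pd j v x * pd i (pd j ℓ) x) := by
    intro i
    rw [hbfun]
    rw [pd_sub ((hσd.fun_mul hvd).fun_neg) (hSvl_d.const_mul 2)]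
    rw [pd_neg (f := fun y => σ y * v y)]
    rw [pd_mul hσd hvd]
    rw [pd_const_mul 2 hSvl_d]
    rw [pd_sum (fun j => (hpvd j).fun_mul (hpld j))]
    rw [Finset.sum_congr rfl (fun j _ => pd_mul (hpvd j) (hpld j))]
  have hpφ : ∀ i, pd i φ x
      = (∑ j, (pd i (pd j v) x * pd j v x + pd j v x * pd i (pd j v) x))
        - ((0 + (pd i σ x - pd i (lap ℓ) x)
            + ∑ j, (pd i (pd j ℓ) x * pd j ℓ x + pd j ℓ x * pd i (pd j ℓ) x)) * (v x * v x)
           + (k^2 + (σ x - lap ℓ x) + ∑ j, pd j ℓ x * pd j ℓ x)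
             * (pd i v x * v x + v x * pd i v x)) := by
    intro i
    rw [hφ]
    rw [pd_sub hSvv_d (hQ_d.fun_mul (hvd.fun_mul hvd))]
    rw [pd_sum (fun j => (hpvd j).fun_mul (hpvd j))]
    rw [Finset.sum_congr rfl (fun j _ => pd_mul (hpvd j) (hpvd j))]
    rw [pd_mul hQ_d (hvd.fun_mul hvd)]
    rw [pd_mul hvd hvd]
    rw [pd_add ((differentiableAt_const _).fun_add (hσd.fun_sub hlapld)) hSll_d]
    rw [pd_add (differentiableAt_const _) (hσd.fun_sub hlapld)]
    rw [pd_const (k^2)]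
    rw [pd_sub hσd hlapld]
    rw [pd_sum (fun j => (hpld j).fun_mul (hpld j))]
    rw [Finset.sum_congr rfl (fun j _ => pd_mul (hpld j) (hpld j))]
  have hpa : ∀ i, pd i a x = pd i σ x - pd i (lap ℓ) x := by
    intro i
    rw [ha]
    exact pd_sub hσd hlapld
  -- ## divergence computations
  have hsplit : dvg (fun y => b y • gradient v y + φ y • gradient ℓ y) x
      = dvg (fun y => b y • gradient v y) x + dvg (fun y => φ y • gradient ℓ y) x := by
    refine dvg_add _ _ x (fun i => ?_) (fun i => ?_)
    · rw [smul_grad_apply]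
      exact hbd.mul (hpvd i)
    · rw [smul_grad_apply]
      exact hφd.mul (hpld i)
  rw [hsplit]
  rw [dvg_smul_grad b v x hbd hpvd]
  rw [dvg_smul_grad φ ℓ x hφd hpld]
  rw [dvg_smul_grad a ℓ x had hpld]
  -- ## normalization of the three divergence sums
  have hBpart : (∑ i, (pd i b x * pd i v x + b x * pd i (pd i v) x))
      = (-(v x)) * (∑ i, pd i σ x * pd i v x)
        + (-(σ x)) * (∑ i, pd i v x * pd i v x)
        + (-2) * (∑ i, ∑ j, pd i (pd j v) x * (pd j ℓ x * pd i v x))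
        + (-2) * (∑ i, ∑ j, pd i (pd j ℓ) x * (pd j v x * pd i v x))
        + b x * (∑ i, pd i (pd i v) x) := by
    have e : ∀ i : Fin (n+1), pd i b x * pd i v x + b x * pd i (pd i v) x
        = (-(v x)) * (pd i σ x * pd i v x) + (-(σ x)) * (pd i v x * pd i v x)
          + (-2) * (∑ j, pd i (pd j v) x * (pd j ℓ x * pd i v x))
          + (-2) * (∑ j, pd i (pd j ℓ) x * (pd j v x * pd i v x))
          + b x * pd i (pd i v) x := by
      intro i
      rw [hpb i]
      have e2 : (∑ j, (pd i (pd j v) x * pd j ℓ x + pd j v x * pd i (pd j ℓ) x)) * pd i v x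
          = (∑ j, pd i (pd j v) x * (pd j ℓ x * pd i v x))
            + (∑ j, pd i (pd j ℓ) x * (pd j v x * pd i v x)) := by
        rw [Finset.sum_mul, ← Finset.sum_add_distrib]
        exact Finset.sum_congr rfl (fun j _ => by ring)
      linear_combination (-2 : ℝ) * e2
    rw [Finset.sum_congr rfl (fun i _ => e i)]
    simp only [Finset.sum_add_distrib, ← Finset.mul_sum]
  have hCpart : (∑ i, (pd i φ x * pd i ℓ x + φ x * pd i (pd i ℓ) x))
      = 2 * (∑ i, ∑ j, pd i (pd j v) x * (pd j v x * pd i ℓ x))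
        + (-(v x * v x)) * (∑ i, pd i σ x * pd i ℓ x)
        + (v x * v x) * (∑ i, pd i (lap ℓ) x * pd i ℓ x)
        + (-2 * (v x * v x)) * (∑ i, ∑ j, pd i (pd j ℓ) x * (pd j ℓ x * pd i ℓ x))
        + (-2 * (v x * (k^2 + (σ x - lap ℓ x) + ∑ j, pd j ℓ x * pd j ℓ x)))
            * (∑ i, pd i v x * pd i ℓ x)
        + φ x * (∑ i, pd i (pd i ℓ) x) := by
    have e : ∀ i : Fin (n+1), pd i φ x * pd i ℓ x + φ x * pd i (pd i ℓ) x
        = 2 * (∑ j, pd i (pd j v) x * (pd j v x * pd i ℓ x))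
          + (-(v x * v x)) * (pd i σ x * pd i ℓ x)
          + (v x * v x) * (pd i (lap ℓ) x * pd i ℓ x)
          + (-2 * (v x * v x)) * (∑ j, pd i (pd j ℓ) x * (pd j ℓ x * pd i ℓ x))
          + (-2 * (v x * (k^2 + (σ x - lap ℓ x) + ∑ j, pd j ℓ x * pd j ℓ x)))
              * (pd i v x * pd i ℓ x)
          + φ x * pd i (pd i ℓ) x := by
      intro i
      rw [hpφ i]
      have eA : (∑ j, (pd i (pd j v) x * pd j v x + pd j v x * pd i (pd j v) x)) * pd i ℓ x
          = 2 * (∑ j, pd i (pd j v) x * (pd j v x * pd i ℓ x)) := by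
        rw [Finset.sum_mul, Finset.mul_sum]
        exact Finset.sum_congr rfl (fun j _ => by ring)
      have eB : (∑ j, (pd i (pd j ℓ) x * pd j ℓ x + pd j ℓ x * pd i (pd j ℓ) x)) * pd i ℓ x
          = 2 * (∑ j, pd i (pd j ℓ) x * (pd j ℓ x * pd i ℓ x)) := by
        rw [Finset.sum_mul, Finset.mul_sum]
        exact Finset.sum_congr rfl (fun j _ => by ring)
      linear_combination eA - (v x * v x) * eB
    rw [Finset.sum_congr rfl (fun i _ => e i)]
    simp only [Finset.sum_add_distrib, ← Finset.mul_sum]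
  have hRpart : (∑ i, (pd i a x * pd i ℓ x + a x * pd i (pd i ℓ) x))
      = (∑ i, pd i σ x * pd i ℓ x) + (-1) * (∑ i, pd i (lap ℓ) x * pd i ℓ x)
        + a x * (∑ i, pd i (pd i ℓ) x) := by
    have e : ∀ i : Fin (n+1), pd i a x * pd i ℓ x + a x * pd i (pd i ℓ) x
        = (pd i σ x * pd i ℓ x) + (-1) * (pd i (lap ℓ) x * pd i ℓ x)
          + a x * pd i (pd i ℓ) x := by
      intro i
      rw [hpa i]
      ring
    rw [Finset.sum_congr rfl (fun i _ => e i)]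
    simp only [Finset.sum_add_distrib, ← Finset.mul_sum]
  rw [hBpart, hCpart, hRpart]
  -- ## hessian terms
  have hhess1 : hess ℓ x (gradient v x) (gradient v x)
      = ∑ i, ∑ j, pd i (pd j ℓ) x * (pd j v x * pd i v x) := by
    rw [hess_pd ℓ x _ _ hpld]
    refine Finset.sum_congr rfl fun i _ => Finset.sum_congr rfl fun j _ => ?_
    simp only [grad_apply]
    ring
  have hhess2 : hess ℓ x (gradient ℓ x) (gradient ℓ x)
      = ∑ i, ∑ j, pd i (pd j ℓ) x * (pd j ℓ x * pd i ℓ x) := by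
    rw [hess_pd ℓ x _ _ hpld]
    refine Finset.sum_congr rfl fun i _ => Finset.sum_congr rfl fun j _ => ?_
    simp only [grad_apply]
    ring
  rw [hhess1, hhess2]
  rw [inner_grad σ v x, norm_grad v x, norm_grad ℓ x]
  -- ## scalar substitutions
  have hφx : φ x = (∑ j, pd j v x * pd j v x)
      - (k^2 + (σ x - lap ℓ x) + ∑ j, pd j ℓ x * pd j ℓ x) * (v x * v x) := by
    rw [hφ]
  rw [hφx, hbx, hqx]
  simp only [ha]
  simp only [lap_pd]
  -- ## Schwarz symmetry and final ring identity
  have hswap : (∑ i, ∑ j, pd i (pd j v) x * (pd j ℓ x * pd i v x))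
      = ∑ i, ∑ j, pd i (pd j v) x * (pd j v x * pd i ℓ x) := by
    rw [Finset.sum_comm]
    refine Finset.sum_congr rfl fun i _ => Finset.sum_congr rfl fun j _ => ?_
    rw [pd_comm hv2 j i]
    ring
  linear_combination (2:ℝ) * hswap
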